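/- With Π an orthogonal projection, a positive definite, v in the image of Π, and Π⁻¹v the a-norm minimizer of {u : Πu = v}, the Pythagoras-type identity ‖v‖_a² = ‖Π⁻¹v‖_a² + ‖v − Π⁻¹v‖_a² holds. -/

import Mathlib

open Matrix

/-- The `a`-weighted inner product `⟨u,v⟩_a = uᵀ a⁻¹ v`. -/
noncomputable def ainner {n : ℕ} (a : Matrix (Fin n) (Fin n) ℝ) (u v : Fin n → ℝ) : ℝ :=
  u ⬝ᵥ (a⁻¹ *ᵥ v)

/-- The `a`-weighted norm `‖u‖_a = √(uᵀ a⁻¹ u)`. -/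
noncomputable def anorm {n : ℕ} (a : Matrix (Fin n) (Fin n) ℝ) (u : Fin n → ℝ) : ℝ :=
  Real.sqrt (ainner a u u)

/-- `ustar` minimizes the `a`-norm over the affine set `{u : Π u = v}`. -/
def IsAMinimizer {n : ℕ} (P a : Matrix (Fin n) (Fin n) ℝ) (v ustar : Fin n → ℝ) : Prop :=
  P *ᵥ ustar = v ∧ ∀ u : Fin n → ℝ, P *ᵥ u = v → anorm a ustar ≤ anorm a u

lemma ainner_nonneg {n : ℕ} {a : Matrix (Fin n) (Fin n) ℝ} (ha : a.PosDef)
    (u : Fin n → ℝ) : 0 ≤ ainner a u u := by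
  have := ha.inv.posSemidef.dotProduct_mulVec_nonneg u
  simpa [ainner] using this

lemma ainner_symm {n : ℕ} {a : Matrix (Fin n) (Fin n) ℝ} (ha : a.PosDef)
    (haSymm : a.IsSymm) (u v : Fin n → ℝ) : ainner a u v = ainner a v u := by
  have hsymm : (a⁻¹)ᵀ = a⁻¹ := by
    rw [Matrix.transpose_nonsing_inv, haSymm.eq]
  unfold ainner
  rw [Matrix.dotProduct_mulVec, ← Matrix.vecMul_transpose, hsymm, dotProduct_comm]

lemma ainner_add_left {n : ℕ} (a : Matrix (Fin n) (Fin n) ℝ) (u v w : Fin n → ℝ) :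
    ainner a (u + v) w = ainner a u w + ainner a v w := by
  simp [ainner, add_dotProduct]

lemma ainner_add_right {n : ℕ} (a : Matrix (Fin n) (Fin n) ℝ) (u v w : Fin n → ℝ) :
    ainner a u (v + w) = ainner a u v + ainner a u w := by
  simp [ainner, Matrix.mulVec_add, dotProduct_add]

lemma ainner_smul_left {n : ℕ} (a : Matrix (Fin n) (Fin n) ℝ) (t : ℝ) (u w : Fin n → ℝ) :
    ainner a (t • u) w = t * ainner a u w := by
  simp [ainner, smul_dotProduct]

lemma ainner_smul_right {n : ℕ} (a : Matrix (Fin n) (Fin n) ℝ) (t : ℝ) (u w : Fin n → ℝ) :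
    ainner a u (t • w) = t * ainner a u w := by
  simp [ainner, Matrix.mulVec_smul, dotProduct_smul]

theorem stmt3 {n : ℕ} (P a : Matrix (Fin n) (Fin n) ℝ)
    (hPsymm : P.IsSymm) (hPidem : P * P = P)
    (ha : a.PosDef) (haSymm : a.IsSymm)
    (v : Fin n → ℝ) (hv : ∃ x, P *ᵥ x = v)
    (Pinv_v : Fin n → ℝ) (hmin : IsAMinimizer P a v Pinv_v) :
    ainner a v v = ainner a Pinv_v Pinv_v + ainner a (v - Pinv_v) (v - Pinv_v) := by
  obtain ⟨x, hx⟩ := hv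
  have hPv : P *ᵥ v = v := by
    rw [← hx, Matrix.mulVec_mulVec, hPidem]
  set w : Fin n → ℝ := v - Pinv_v with hw
  have hPw : P *ᵥ w = 0 := by
    rw [hw, Matrix.mulVec_sub, hPv, hmin.1, sub_self]
  -- orthogonality
  set c : ℝ := ainner a Pinv_v w with hc
  set d : ℝ := ainner a w w with hd
  have hd0 : 0 ≤ d := ainner_nonneg ha w
  have key : ∀ t : ℝ, 0 ≤ 2 * t * c + t ^ 2 * d := by
    intro t
    have hPu : P *ᵥ (Pinv_v + t • w) = v := by
      rw [Matrix.mulVec_add, Matrix.mulVec_smul, hPw, hmin.1, smul_zero, add_zero]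
    have hle := hmin.2 _ hPu
    have hle2 : ainner a Pinv_v Pinv_v ≤ ainner a (Pinv_v + t • w) (Pinv_v + t • w) := by
      have := Real.sqrt_le_sqrt_iff (x := ainner a Pinv_v Pinv_v)
        (ainner_nonneg ha (Pinv_v + t • w))
      exact this.mp hle
    have hexp : ainner a (Pinv_v + t • w) (Pinv_v + t • w)
        = ainner a Pinv_v Pinv_v + 2 * t * c + t ^ 2 * d := by
      rw [ainner_add_left, ainner_add_right, ainner_add_right, ainner_smul_left,
        ainner_smul_right, ainner_smul_left, ainner_smul_right,
        ainner_symm ha haSymm w Pinv_v]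
      ring
    linarith [hexp ▸ hle2]
  have hc0 : c = 0 := by
    have h1 := key (-c / (d + 1))
    have hd1 : (0:ℝ) < d + 1 := by linarith
    have e : 2 * (-c / (d + 1)) * c + (-c / (d + 1)) ^ 2 * d
        = -(c ^ 2 * (d + 2)) / (d + 1) ^ 2 := by
      field_simp
      ring
    rw [e] at h1
    have h3 : 0 ≤ -(c ^ 2 * (d + 2)) := by
      have hne : ((d + 1) ^ 2 : ℝ) ≠ 0 := by positivity
      have := mul_nonneg h1 (sq_nonneg (d + 1))
      rwa [div_mul_cancel₀ _ hne] at this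
    have h4 : c ^ 2 ≤ 0 := by nlinarith
    have h5 : c ^ 2 = 0 := le_antisymm h4 (sq_nonneg c)
    exact pow_eq_zero_iff (two_ne_zero) |>.mp h5
  have hvw : v = Pinv_v + w := by rw [hw]; ring
  calc ainner a v v = ainner a (Pinv_v + w) (Pinv_v + w) := by rw [← hvw]
    _ = ainner a Pinv_v Pinv_v + (ainner a Pinv_v w + ainner a w Pinv_v) + ainner a w w := by
        rw [ainner_add_left, ainner_add_right, ainner_add_right]; ring
    _ = ainner a Pinv_v Pinv_v + ainner a w w := by
        rw [ainner_symm ha haSymm w Pinv_v, ← hc, hc0]; ring
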